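/- The double integral ∬_{[0,1]^2} (1−x)/((1+xy)·ln(xy)) dx dy converges and equals −ln(4/π); equivalently, ln(4/π) = −∬_{[0,1]^2} (1−x)/((1+xy)·ln(xy)) dx dy. -/

import Mathlib

open MeasureTheory Real Set Filter Topology Finset

noncomputable def Gaux (t : ℝ) : ℝ :=
  -(t+1)⁻¹ + (t+2)⁻¹ - Real.log (t+1) + 2*Real.log (t+2) - Real.log (t+3)

noncomputable def Baux (t : ℝ) : ℝ := ((t+1)^2*(t+2))⁻¹ - ((t+2)^2*(t+3))⁻¹

lemma Baux_nonneg {t : ℝ} (ht : 0 ≤ t) : 0 ≤ Baux t := by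
  have h : (t+1)^2*(t+2) ≤ (t+2)^2*(t+3) := by nlinarith
  have h0 : (0:ℝ) < (t+1)^2*(t+2) := by positivity
  simpa [Baux, sub_nonneg] using inv_anti₀ h0 h

lemma hasDerivAt_Gaux {t : ℝ} (ht : 0 ≤ t) : HasDerivAt Gaux (Baux t) t := by
  have h1 : (0:ℝ) < t + 1 := by linarith
  have h2 : (0:ℝ) < t + 2 := by linarith
  have h3 : (0:ℝ) < t + 3 := by linarith
  have hid : ∀ c : ℝ, HasDerivAt (fun t : ℝ => t + c) 1 t := fun c =>
    (hasDerivAt_id t).add_const c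
  have hinv1 : HasDerivAt (fun t : ℝ => (t+1)⁻¹) (-1/(t+1)^2) t := by
    simpa [Pi.inv_def] using (hid 1).inv h1.ne'
  have hinv2 : HasDerivAt (fun t : ℝ => (t+2)⁻¹) (-1/(t+2)^2) t := by
    simpa [Pi.inv_def] using (hid 2).inv h2.ne'
  have hlog1 : HasDerivAt (fun t : ℝ => Real.log (t+1)) (t+1)⁻¹ t := by
    simpa using (hid 1).log h1.ne'
  have hlog2 : HasDerivAt (fun t : ℝ => Real.log (t+2)) (t+2)⁻¹ t := by
    simpa using (hid 2).log h2.ne'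
  have hlog3 : HasDerivAt (fun t : ℝ => Real.log (t+3)) (t+3)⁻¹ t := by
    simpa using (hid 3).log h3.ne'
  have H := ((((hinv1.neg.add hinv2).sub hlog1).add ((hlog2.const_mul 2))).sub hlog3)
  have hG : Gaux = fun t : ℝ => -(t+1)⁻¹ + (t+2)⁻¹ - Real.log (t+1) + 2*Real.log (t+2) - Real.log (t+3) := rfl
  rw [hG]
  exact H.congr_deriv (by unfold Baux; field_simp; ring)

lemma tendsto_Gaux : Tendsto Gaux atTop (𝓝 0) := by
  have hadd : ∀ c : ℝ, Tendsto (fun t : ℝ => t + c) atTop atTop := fun c =>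
    tendsto_atTop_add_const_right _ c tendsto_id
  have hinv : ∀ c : ℝ, Tendsto (fun t : ℝ => (t+c)⁻¹) atTop (𝓝 0) := fun c =>
    tendsto_inv_atTop_zero.comp (hadd c)
  have hr : ∀ c : ℝ, Tendsto (fun t : ℝ => Real.log ((t+c)/(t+1))) atTop (𝓝 0) := by
    intro c
    have : Tendsto (fun t : ℝ => (t+c)/(t+1)) atTop (𝓝 1) := by
      have := Tendsto.add (tendsto_const_nhds (x := (1:ℝ))) ((hinv 1).const_mul (c-1))
      apply Tendsto.congr' _ (by simpa using this)
      filter_upwards [eventually_gt_atTop (0:ℝ)] with t ht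
      field_simp
      ring
    simpa using (this.log one_ne_zero)
  have hr2 : ∀ c : ℝ, Tendsto (fun t : ℝ => Real.log ((t+c)/(t+3))) atTop (𝓝 0) := by
    intro c
    have : Tendsto (fun t : ℝ => (t+c)/(t+3)) atTop (𝓝 1) := by
      have := Tendsto.add (tendsto_const_nhds (x := (1:ℝ))) ((hinv 3).const_mul (c-3))
      apply Tendsto.congr' _ (by simpa using this)
      filter_upwards [eventually_gt_atTop (0:ℝ)] with t ht
      field_simp
      ring
    simpa using (this.log one_ne_zero)
  have key : Tendsto (fun t : ℝ => -(t+1)⁻¹ + (t+2)⁻¹ + (Real.log ((t+2)/(t+1)) + Real.log ((t+2)/(t+3)))) atTop (𝓝 0) := by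
    simpa using (((hinv 1).neg.add (hinv 2)).add ((hr 2).add (hr2 2)))
  apply key.congr'
  filter_upwards [eventually_gt_atTop (0:ℝ)] with t ht
  have h1 : (0:ℝ) < t + 1 := by linarith
  have h2 : (0:ℝ) < t + 2 := by linarith
  have h3 : (0:ℝ) < t + 3 := by linarith
  rw [Real.log_div h2.ne' h1.ne', Real.log_div h2.ne' h3.ne']
  unfold Gaux
  ring

noncomputable def Term (k : ℕ) : ℝ := -(Gaux (2*k))

lemma integrable_Baux (k : ℕ) : IntegrableOn (fun s => Baux (2*k+s)) (Ioi (0:ℝ)) := by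
  apply integrableOn_Ioi_deriv_of_nonneg' (g := fun s => Gaux (2*k+s)) (l := 0)
  · intro s hs
    have h0 : (0:ℝ) ≤ 2*k + s := add_nonneg (by positivity) hs
    have := (hasDerivAt_Gaux h0).comp s ((hasDerivAt_id s).const_add ((2:ℝ)*(k:ℝ)))
    simpa [Function.comp_def] using this
  · intro s hs
    exact Baux_nonneg (add_nonneg (by positivity) hs.le)
  · exact tendsto_Gaux.comp (tendsto_atTop_add_const_left _ _ tendsto_id)

lemma integral_Baux (k : ℕ) : ∫ s in Ioi (0:ℝ), Baux (2*k+s) = Term k := by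
  have h := integral_Ioi_of_hasDerivAt_of_tendsto' (f := fun s => Gaux (2*k+s))
    (f' := fun s => Baux (2*k+s)) (a := 0) (m := 0) ?_ (integrable_Baux k)
    (tendsto_Gaux.comp (tendsto_atTop_add_const_left _ _ tendsto_id))
  · simpa [Term] using h
  · intro s hs
    have h0 : (0:ℝ) ≤ 2*k + s := add_nonneg (by positivity) hs
    have := (hasDerivAt_Gaux h0).comp s ((hasDerivAt_id s).const_add ((2:ℝ)*(k:ℝ)))
    simpa [Function.comp_def] using this

lemma Term_nonneg (k : ℕ) : 0 ≤ Term k := by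
  rw [← integral_Baux k]
  apply setIntegral_nonneg measurableSet_Ioi
  intro s hs
  exact Baux_nonneg (add_nonneg (by positivity) hs.le)

lemma lintegral_Baux (k : ℕ) :
    ∫⁻ s in Ioi (0:ℝ), ENNReal.ofReal (Baux (2*k+s)) = ENNReal.ofReal (Term k) := by
  rw [← ofReal_integral_eq_lintegral_ofReal (integrable_Baux k)
    (((ae_restrict_iff' measurableSet_Ioi).2 (ae_of_all _ fun s hs =>
      Baux_nonneg (add_nonneg (by positivity) hs.le))))]
  rw [integral_Baux]

lemma integrableOn_rpow01 {a : ℝ} (ha : -1 < a) :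
    IntegrableOn (fun x : ℝ => x ^ a) (Ioo (0:ℝ) 1) := by
  have := intervalIntegral.intervalIntegrable_rpow' (r := a) ha (a := 0) (b := 1)
  rw [intervalIntegrable_iff_integrableOn_Ioc_of_le zero_le_one] at this
  exact this.mono_set Ioo_subset_Ioc_self

lemma integral_rpow01 {a : ℝ} (ha : -1 < a) :
    ∫ x in Ioo (0:ℝ) 1, x ^ a = (a+1)⁻¹ := by
  rw [← integral_Ioc_eq_integral_Ioo, ← intervalIntegral.integral_of_le zero_le_one,
    integral_rpow (Or.inl ha)]
  have h1 : (0:ℝ) ^ (a+1) = 0 := Real.zero_rpow (by linarith)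
  rw [Real.one_rpow, h1]
  ring

lemma integrableOn_one_sub_rpow {a : ℝ} (ha : -1 < a) :
    IntegrableOn (fun x : ℝ => (1-x) * x ^ a) (Ioo (0:ℝ) 1) := by
  have h : IntegrableOn (fun x : ℝ => x ^ a - x ^ (a+1)) (Ioo (0:ℝ) 1) := by
    exact (integrableOn_rpow01 ha).sub (integrableOn_rpow01 (by linarith : (-1:ℝ) < a+1))
  apply h.congr_fun ?_ measurableSet_Ioo
  intro x hx
  simp only
  rw [Real.rpow_add hx.1, Real.rpow_one]
  ring

lemma integral_one_sub_rpow {a : ℝ} (ha : -1 < a) :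
    ∫ x in Ioo (0:ℝ) 1, (1-x) * x ^ a = (a+1)⁻¹ - (a+2)⁻¹ := by
  rw [setIntegral_congr_fun measurableSet_Ioo
    (g := fun x : ℝ => x ^ a - x ^ (a+1)) ?_]
  · rw [integral_sub (integrableOn_rpow01 ha) (integrableOn_rpow01 (by linarith)),
      integral_rpow01 ha, integral_rpow01 (by linarith)]
    norm_num
    ring_nf
  · intro x hx
    simp only
    rw [Real.rpow_add hx.1, Real.rpow_one]
    ring

-- inner integral over y
lemma lintegral_y (a : ℝ) (ha : 0 ≤ a) {x : ℝ} (hx : x ∈ Ioo (0:ℝ) 1) :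
    ∫⁻ y in Ioo (0:ℝ) 1, ENNReal.ofReal ((1-x) * (1-x*y) * ((x*y) ^ a)) =
      ENNReal.ofReal ((1-x) * x^a * ((a+1)⁻¹ - x*(a+2)⁻¹)) := by
  have ha1 : (-1:ℝ) < a := by linarith
  have key : ∀ y ∈ Ioo (0:ℝ) 1, (1-x) * (1-x*y) * ((x*y) ^ a) =
      ((1-x) * x^a) * y^a - ((1-x) * x^(a+1)) * y^(a+1) := by
    intro y hy
    rw [Real.mul_rpow hx.1.le hy.1.le, Real.rpow_add hx.1, Real.rpow_add hy.1,
      Real.rpow_one, Real.rpow_one]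
    ring
  have hnn0 : ∀ y ∈ Ioo (0:ℝ) 1,
      (0:ℝ) ≤ ((1-x) * x^a) * y^a - ((1-x) * x^(a+1)) * y^(a+1) := by
    intro y hy
    rw [← key y hy]
    have h1 : x*y < 1 := by nlinarith [hx.2, hy.2, hx.1, hy.1]
    have h2 : (0:ℝ) ≤ (x*y) ^ a := Real.rpow_nonneg (mul_nonneg hx.1.le hy.1.le) _
    have h3 : (0:ℝ) ≤ 1 - x := by linarith [hx.2]
    have h4 : (0:ℝ) ≤ 1 - x*y := by linarith
    positivity
  rw [setLIntegral_congr_fun (g := fun y : ℝ =>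
      ENNReal.ofReal (((1-x) * x^a) * y^a - ((1-x) * x^(a+1)) * y^(a+1)))
      measurableSet_Ioo (fun y hy => congrArg ENNReal.ofReal (key y hy))]
  have hint : IntegrableOn
      (fun y : ℝ => ((1-x) * x^a) * y^a - ((1-x) * x^(a+1)) * y^(a+1)) (Ioo (0:ℝ) 1) := by
    exact ((integrableOn_rpow01 ha1).const_mul _).sub
      ((integrableOn_rpow01 (by linarith)).const_mul _)
  have hnn : 0 ≤ᵐ[volume.restrict (Ioo (0:ℝ) 1)]
      (fun y : ℝ => ((1-x) * x^a) * y^a - ((1-x) * x^(a+1)) * y^(a+1)) :=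
    (ae_restrict_iff' measurableSet_Ioo).2 (ae_of_all _ fun y hy => hnn0 y hy)
  rw [← ofReal_integral_eq_lintegral_ofReal hint hnn]
  congr 1
  rw [integral_sub ((integrableOn_rpow01 ha1).const_mul _)
      ((integrableOn_rpow01 (by linarith)).const_mul _),
    integral_const_mul, integral_const_mul, integral_rpow01 ha1, integral_rpow01 (by linarith)]
  rw [Real.rpow_add hx.1, Real.rpow_one]
  ring_nf

lemma lintegral_x (a : ℝ) (ha : 0 ≤ a) :
    ∫⁻ x in Ioo (0:ℝ) 1, ENNReal.ofReal ((1-x) * x^a * ((a+1)⁻¹ - x*(a+2)⁻¹)) =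
      ENNReal.ofReal (Baux a) := by
  have ha1 : (-1:ℝ) < a := by linarith
  have key : ∀ x ∈ Ioo (0:ℝ) 1, (1-x) * x^a * ((a+1)⁻¹ - x*(a+2)⁻¹) =
      ((a+1)⁻¹ * (x^a - x^(a+1))) - ((a+2)⁻¹ * (x^(a+1) - x^(a+2))) := by
    intro x hx
    have e1 : x^(a+1) = x^a * x := by rw [Real.rpow_add hx.1, Real.rpow_one]
    have e2 : x^(a+2) = x^a * x * x := by
      rw [show (a+2:ℝ) = a + 1 + 1 by ring, Real.rpow_add hx.1, Real.rpow_add hx.1,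
        Real.rpow_one]
    rw [e1, e2]
    ring
  have hi1 : IntegrableOn (fun x : ℝ => x^a - x^(a+1)) (Ioo (0:ℝ) 1) := by
    exact (integrableOn_rpow01 ha1).sub (integrableOn_rpow01 (by linarith))
  have hi2 : IntegrableOn (fun x : ℝ => x^(a+1) - x^(a+2)) (Ioo (0:ℝ) 1) := by
    exact (integrableOn_rpow01 (by linarith)).sub (integrableOn_rpow01 (by linarith))
  have hint : IntegrableOn
      (fun x : ℝ => ((a+1)⁻¹ * (x^a - x^(a+1))) - ((a+2)⁻¹ * (x^(a+1) - x^(a+2)))) (Ioo (0:ℝ) 1) :=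
    (hi1.const_mul _).sub (hi2.const_mul _)
  have hnn0 : ∀ x ∈ Ioo (0:ℝ) 1,
      (0:ℝ) ≤ ((a+1)⁻¹ * (x^a - x^(a+1))) - ((a+2)⁻¹ * (x^(a+1) - x^(a+2))) := by
    intro x hx
    rw [← key x hx]
    have h1 : (0:ℝ) ≤ x ^ a := Real.rpow_nonneg hx.1.le _
    have h2 : (a+2)⁻¹ ≤ (a+1)⁻¹ := inv_anti₀ (by linarith) (by linarith)
    have h3 : x * (a+2)⁻¹ ≤ (a+1)⁻¹ :=
      calc x * (a+2)⁻¹ ≤ 1 * (a+2)⁻¹ :=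
            mul_le_mul_of_nonneg_right hx.2.le (by positivity)
        _ ≤ (a+1)⁻¹ := by rw [one_mul]; exact h2
    have h4 : (0:ℝ) ≤ 1 - x := by linarith [hx.2]
    have h5 : (0:ℝ) ≤ (a+1)⁻¹ - x*(a+2)⁻¹ := by linarith
    positivity
  have hnn : 0 ≤ᵐ[volume.restrict (Ioo (0:ℝ) 1)]
      (fun x : ℝ => ((a+1)⁻¹ * (x^a - x^(a+1))) - ((a+2)⁻¹ * (x^(a+1) - x^(a+2)))) :=
    (ae_restrict_iff' measurableSet_Ioo).2 (ae_of_all _ fun x hx => hnn0 x hx)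
  rw [setLIntegral_congr_fun (g := fun x : ℝ =>
      ENNReal.ofReal (((a+1)⁻¹ * (x^a - x^(a+1))) - ((a+2)⁻¹ * (x^(a+1) - x^(a+2)))))
      measurableSet_Ioo (fun x hx => congrArg ENNReal.ofReal (key x hx))]
  rw [← ofReal_integral_eq_lintegral_ofReal hint hnn]
  congr 1
  rw [integral_sub (hi1.const_mul _) (hi2.const_mul _), integral_const_mul, integral_const_mul,
    integral_sub (integrableOn_rpow01 ha1) (integrableOn_rpow01 (by linarith)),
    integral_sub (integrableOn_rpow01 (by linarith)) (integrableOn_rpow01 (by linarith)),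
    integral_rpow01 ha1, integral_rpow01 (by linarith), integral_rpow01 (by linarith)]
  have e1 : a + 1 + 1 = a + 2 := by ring
  have e2 : a + 2 + 1 = a + 3 := by ring
  rw [e1, e2]
  unfold Baux
  have p1 : (0:ℝ) < a+1 := by linarith
  have p2 : (0:ℝ) < a+2 := by linarith
  have p3 : (0:ℝ) < a+3 := by linarith
  field_simp
  ring

lemma measurable_q (a : ℝ) :
    Measurable (fun p : ℝ × ℝ => ENNReal.ofReal ((1-p.1) * (1-p.1*p.2) * ((p.1*p.2) ^ a))) := by
  apply ENNReal.measurable_ofReal.comp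
  fun_prop

lemma lintegral_q (a : ℝ) (ha : 0 ≤ a) :
    ∫⁻ p in (Ioo (0:ℝ) 1 ×ˢ Ioo (0:ℝ) 1),
      ENNReal.ofReal ((1-p.1) * (1-p.1*p.2) * ((p.1*p.2) ^ a)) = ENNReal.ofReal (Baux a) := by
  rw [MeasureTheory.Measure.volume_eq_prod, ← Measure.prod_restrict,
    lintegral_prod _ (measurable_q a).aemeasurable]
  calc ∫⁻ x in Ioo (0:ℝ) 1, ∫⁻ y in Ioo (0:ℝ) 1,
        ENNReal.ofReal ((1-x) * (1-x*y) * ((x*y) ^ a))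
      = ∫⁻ x in Ioo (0:ℝ) 1, ENNReal.ofReal ((1-x) * x^a * ((a+1)⁻¹ - x*(a+2)⁻¹)) := by
        apply setLIntegral_congr_fun measurableSet_Ioo
        exact fun x hx => lintegral_y a ha hx
    _ = ENNReal.ofReal (Baux a) := lintegral_x a ha

-- exp integral
lemma lintegral_rpow_s {u : ℝ} (hu : u ∈ Ioo (0:ℝ) 1) :
    ∫⁻ s in Ioi (0:ℝ), ENNReal.ofReal (u ^ s) = ENNReal.ofReal (-Real.log u)⁻¹ := by
  have hlog : Real.log u < 0 := Real.log_neg hu.1 hu.2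
  set c : ℝ := -Real.log u with hc
  have hcpos : 0 < c := by simp [hc]; linarith
  have hrw : ∀ s : ℝ, u ^ s = Real.exp (-c * s) := by
    intro s
    rw [Real.rpow_def_of_pos hu.1]
    congr 1
    simp [hc]
  have hint : IntegrableOn (fun s : ℝ => Real.exp (-c * s)) (Ioi (0:ℝ)) :=
    exp_neg_integrableOn_Ioi 0 hcpos
  have hval : ∫ s in Ioi (0:ℝ), Real.exp (-c * s) = c⁻¹ := by
    have hderiv : ∀ s ∈ Ici (0:ℝ),
        HasDerivAt (fun s : ℝ => -c⁻¹ * Real.exp (-c * s)) (Real.exp (-c * s)) s := by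
      intro s _
      have h1 : HasDerivAt (fun s : ℝ => -c * s) (-c) s := by
        simpa using (hasDerivAt_id s).const_mul (-c)
      have := (h1.exp).const_mul (-c⁻¹)
      exact this.congr_deriv (by field_simp)
    have htend : Tendsto (fun s : ℝ => -c⁻¹ * Real.exp (-c * s)) atTop (𝓝 0) := by
      have : Tendsto (fun s : ℝ => -c * s) atTop atBot :=
        tendsto_id.const_mul_atTop_of_neg (by linarith)
      have := (Real.tendsto_exp_atBot.comp this).const_mul (-c⁻¹)
      simpa using this
    have := integral_Ioi_of_hasDerivAt_of_tendsto' hderiv hint htend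
    rw [this]
    simp
  calc ∫⁻ s in Ioi (0:ℝ), ENNReal.ofReal (u ^ s)
      = ∫⁻ s in Ioi (0:ℝ), ENNReal.ofReal (Real.exp (-c * s)) := by
        simp_rw [hrw]
    _ = ENNReal.ofReal c⁻¹ := by
        rw [← ofReal_integral_eq_lintegral_ofReal hint
          (ae_of_all _ fun s => (Real.exp_pos _).le), hval]

noncomputable def hfun (k : ℕ) (p : ℝ × ℝ) : ℝ :=
  (1-p.1) * (1-p.1*p.2) * (p.1*p.2)^(2*k) / (-Real.log (p.1*p.2))

noncomputable def Efun (k : ℕ) (p : ℝ × ℝ) (s : ℝ) : ℝ :=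
  (1-p.1) * (1-p.1*p.2) * Real.exp (Real.log (p.1*p.2) * (2*(k:ℝ)+s))

lemma mem_Ioo_mul {p : ℝ × ℝ} (hp : p ∈ (Ioo (0:ℝ) 1 ×ˢ Ioo (0:ℝ) 1)) :
    p.1 * p.2 ∈ Ioo (0:ℝ) 1 := by
  obtain ⟨⟨h1, h2⟩, h3, h4⟩ := hp
  constructor
  · positivity
  · nlinarith

lemma Efun_eq (k : ℕ) {p : ℝ × ℝ} (hp : p ∈ (Ioo (0:ℝ) 1 ×ˢ Ioo (0:ℝ) 1)) (s : ℝ) :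
    Efun k p s = (1-p.1) * (1-p.1*p.2) * ((p.1*p.2) ^ (2*(k:ℝ)+s)) := by
  unfold Efun
  rw [Real.rpow_def_of_pos (mem_Ioo_mul hp).1]

lemma stepB1 (k : ℕ) {p : ℝ × ℝ} (hp : p ∈ (Ioo (0:ℝ) 1 ×ˢ Ioo (0:ℝ) 1)) :
    ∫⁻ s in Ioi (0:ℝ), ENNReal.ofReal (Efun k p s) = ENNReal.ofReal (hfun k p) := by
  have hu := mem_Ioo_mul hp
  set u : ℝ := p.1 * p.2 with hudef
  have h1x : p.1 < 1 := hp.1.2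
  have hC : (0:ℝ) ≤ (1-p.1) * (1-u) * u^(2*k) :=
    mul_nonneg (mul_nonneg (by linarith) (by linarith [hu.2])) (pow_nonneg hu.1.le _)
  have hrw : ∀ s : ℝ, Efun k p s = ((1-p.1) * (1-u) * u^(2*k)) * u ^ s := by
    intro s
    rw [Efun_eq k hp s, Real.rpow_add hu.1]
    rw [show (2*(k:ℝ)) = ((2*k : ℕ) : ℝ) by push_cast; ring, Real.rpow_natCast]
    ring
  simp_rw [hrw]
  simp_rw [ENNReal.ofReal_mul hC]
  rw [lintegral_const_mul' _ _ ENNReal.ofReal_ne_top, lintegral_rpow_s hu]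
  rw [← ENNReal.ofReal_mul hC]
  simp [hfun, div_eq_mul_inv]
  rfl

lemma measurable_E3 (k : ℕ) :
    Measurable (fun z : (ℝ × ℝ) × ℝ => ENNReal.ofReal (Efun k z.1 z.2)) := by
  apply ENNReal.measurable_ofReal.comp
  unfold Efun
  exact ((measurable_const.sub (measurable_fst.comp measurable_fst)).mul
      (measurable_const.sub ((measurable_fst.comp measurable_fst).mul
        (measurable_snd.comp measurable_fst)))).mul
    (Real.measurable_exp.comp ((Real.measurable_log.comp
      ((measurable_fst.comp measurable_fst).mul (measurable_snd.comp measurable_fst))).mul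
      (measurable_const.add measurable_snd)))

lemma lintegral_E (k : ℕ) {s : ℝ} (hs : s ∈ Ioi (0:ℝ)) :
    ∫⁻ p in (Ioo (0:ℝ) 1 ×ˢ Ioo (0:ℝ) 1), ENNReal.ofReal (Efun k p s) =
      ENNReal.ofReal (Baux (2*(k:ℝ)+s)) := by
  rw [setLIntegral_congr_fun (g := fun p : ℝ × ℝ =>
      ENNReal.ofReal ((1-p.1) * (1-p.1*p.2) * ((p.1*p.2) ^ (2*(k:ℝ)+s))))
      (measurableSet_Ioo.prod measurableSet_Ioo)
      (fun p hp => congrArg ENNReal.ofReal (Efun_eq k hp s))]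
  exact lintegral_q _ (add_nonneg (by positivity) hs.le)

lemma stepB (k : ℕ) :
    ∫⁻ p in (Ioo (0:ℝ) 1 ×ˢ Ioo (0:ℝ) 1), ENNReal.ofReal (hfun k p) =
      ENNReal.ofReal (Term k) := by
  have hS : MeasurableSet (Ioo (0:ℝ) 1 ×ˢ Ioo (0:ℝ) 1) :=
    measurableSet_Ioo.prod measurableSet_Ioo
  rw [setLIntegral_congr_fun (g := fun p : ℝ × ℝ => ∫⁻ s in Ioi (0:ℝ),
      ENNReal.ofReal (Efun k p s)) hS (fun p hp => (stepB1 k hp).symm)]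
  rw [lintegral_lintegral_swap ((measurable_E3 k).aemeasurable)]
  rw [setLIntegral_congr_fun (g := fun s : ℝ => ENNReal.ofReal (Baux (2*(k:ℝ)+s)))
      measurableSet_Ioi (fun s hs => lintegral_E k hs)]
  exact lintegral_Baux k

noncomputable def negf (p : ℝ × ℝ) : ℝ :=
  (1-p.1) / ((1+p.1*p.2) * (-Real.log (p.1*p.2)))

lemma hfun_nonneg (k : ℕ) {p : ℝ × ℝ} (hp : p ∈ (Ioo (0:ℝ) 1 ×ˢ Ioo (0:ℝ) 1)) :
    0 ≤ hfun k p := by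
  have hu := mem_Ioo_mul hp
  have hlog : Real.log (p.1*p.2) < 0 := Real.log_neg hu.1 hu.2
  have h1 : p.1 < 1 := hp.1.2
  unfold hfun
  apply div_nonneg
  · exact mul_nonneg (mul_nonneg (by linarith) (by linarith [hu.2])) (pow_nonneg hu.1.le _)
  · linarith

lemma stepA_pointwise {p : ℝ × ℝ} (hp : p ∈ (Ioo (0:ℝ) 1 ×ˢ Ioo (0:ℝ) 1)) :
    ∑' k : ℕ, ENNReal.ofReal (hfun k p) = ENNReal.ofReal (negf p) := by
  have hu := mem_Ioo_mul hp
  set u : ℝ := p.1 * p.2 with hudef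
  have hlog : Real.log u < 0 := Real.log_neg hu.1 hu.2
  have hsq0 : (0:ℝ) ≤ u^2 := sq_nonneg u
  have hsq1 : u^2 < 1 := by nlinarith [hu.1, hu.2]
  set C0 : ℝ := (1-p.1) * (1-u) / (-Real.log u) with hC0
  have hrw : ∀ k : ℕ, hfun k p = C0 * (u^2)^k := by
    intro k
    unfold hfun
    rw [← hudef, ← pow_mul]
    rw [hC0]
    ring
  have hsum : HasSum (fun k : ℕ => hfun k p) (negf p) := by
    have hg := (hasSum_geometric_of_lt_one hsq0 hsq1).mul_left C0
    have hval : C0 * (1-u^2)⁻¹ = negf p := by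
      unfold negf
      rw [← hudef, hC0]
      have h1 : (0:ℝ) < -Real.log u := by linarith
      have h2 : (0:ℝ) < 1 + u := by linarith [hu.1]
      have h3 : (0:ℝ) < 1 - u := by linarith [hu.2]
      have h5 : (0:ℝ) < 1 - u^2 := by nlinarith
      rw [div_eq_mul_inv, mul_assoc, ← mul_inv, ← div_eq_mul_inv,
        div_eq_div_iff (by positivity) (by positivity)]
      ring
    rw [← hval]
    apply hg.congr_fun
    intro k
    rw [hrw k]
  rw [← ENNReal.ofReal_tsum_of_nonneg (fun k => hfun_nonneg k hp) hsum.summable,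
    hsum.tsum_eq]

lemma measurable_hfun (k : ℕ) : Measurable (fun p : ℝ × ℝ => ENNReal.ofReal (hfun k p)) := by
  apply ENNReal.measurable_ofReal.comp
  unfold hfun
  apply Measurable.div
  · exact ((measurable_const.sub measurable_fst).mul
      (measurable_const.sub (measurable_fst.mul measurable_snd))).mul
      ((measurable_fst.mul measurable_snd).pow_const _)
  · exact (Real.measurable_log.comp (measurable_fst.mul measurable_snd)).neg

lemma main_lintegral :
    ∫⁻ p in (Ioo (0:ℝ) 1 ×ˢ Ioo (0:ℝ) 1), ENNReal.ofReal (negf p) =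
      ∑' k : ℕ, ENNReal.ofReal (Term k) := by
  have hS : MeasurableSet (Ioo (0:ℝ) 1 ×ˢ Ioo (0:ℝ) 1) :=
    measurableSet_Ioo.prod measurableSet_Ioo
  rw [setLIntegral_congr_fun (g := fun p : ℝ × ℝ => ∑' k : ℕ, ENNReal.ofReal (hfun k p)) hS
      (fun p hp => (stepA_pointwise hp).symm)]
  rw [lintegral_tsum (fun k => (measurable_hfun k).aemeasurable)]
  exact tsum_congr fun k => stepB k

noncomputable def ck (k : ℕ) : ℝ := (2*(k:ℝ)+1)⁻¹ - (2*(k:ℝ)+2)⁻¹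
noncomputable def wk (k : ℕ) : ℝ :=
  2*Real.log (2*(k:ℝ)+2) - Real.log (2*(k:ℝ)+1) - Real.log (2*(k:ℝ)+3)

lemma Term_eq (k : ℕ) : Term k = ck k - wk k := by
  unfold Term Gaux ck wk
  ring

lemma sum_ck (n : ℕ) : ∑ i ∈ range n, ck i = (harmonic (2*n) : ℝ) - (harmonic n : ℝ) := by
  induction n with
  | zero => simp [harmonic]
  | succ n ih =>
    rw [Finset.sum_range_succ, ih]
    have h2 : 2*(n+1) = (2*n+1)+1 := by ring
    rw [h2, harmonic_succ, harmonic_succ, harmonic_succ]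
    push_cast
    unfold ck
    push_cast
    have e1 : ((1:ℝ)+(n:ℝ)) ≠ 0 := by positivity
    have e2 : ((2:ℝ)+(n:ℝ)*2) ≠ 0 := by positivity
    have e3 : ((1:ℝ)+(n:ℝ)*2) ≠ 0 := by positivity
    field_simp
    ring

lemma tendsto_sum_ck : Tendsto (fun n => ∑ i ∈ range n, ck i) atTop (𝓝 (Real.log 2)) := by
  have h2n : Tendsto (fun n : ℕ => 2*n) atTop atTop :=
    tendsto_atTop_atTop_of_monotone (fun a b h => by omega) (fun b => ⟨b, by omega⟩)
  have ha := tendsto_harmonic_sub_log.comp h2n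
  have hb := tendsto_harmonic_sub_log
  have hc := (ha.sub hb).add_const (Real.log 2)
  rw [sub_self, zero_add] at hc
  apply hc.congr'
  filter_upwards [eventually_ge_atTop 1] with n hn
  have hn0 : (n:ℝ) ≠ 0 := by positivity
  simp only [Function.comp]
  rw [sum_ck]
  have : Real.log ((2*n : ℕ) : ℝ) = Real.log 2 + Real.log n := by
    push_cast
    rw [Real.log_mul (by norm_num) hn0]
  rw [this]
  ring

lemma summable_ck : Summable ck := by
  have hs : Summable (fun n : ℕ => 1 / ((n:ℝ)+1) ^ 2) := by
    have := (Real.summable_one_div_nat_pow (p := 2)).mpr (by norm_num)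
    have h := (summable_nat_add_iff (f := fun n : ℕ => 1 / (n:ℝ) ^ 2) 1).mpr this
    simpa using h
  apply Summable.of_nonneg_of_le ?_ ?_ hs
  · intro k
    unfold ck
    have : (2*(k:ℝ)+2)⁻¹ ≤ (2*(k:ℝ)+1)⁻¹ := inv_anti₀ (by positivity) (by linarith)
    linarith
  · intro k
    unfold ck
    have h1 : (0:ℝ) < 2*(k:ℝ)+1 := by positivity
    have h2 : (0:ℝ) < 2*(k:ℝ)+2 := by positivity
    rw [inv_sub_inv h1.ne' h2.ne']
    rw [div_le_div_iff₀ (by positivity) (by positivity)]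
    push_cast
    nlinarith [sq_nonneg ((k:ℝ))]

lemma hasSum_ck : HasSum ck (Real.log 2) := by
  have h := summable_ck.hasSum
  have := h.tendsto_sum_nat
  rw [tendsto_nhds_unique this tendsto_sum_ck] at h
  exact h

lemma sum_wk (n : ℕ) : ∑ i ∈ range n, wk i =
    Real.log (∏ i ∈ range n, ((2:ℝ) * i + 2) / (2 * i + 1) * ((2 * i + 2) / (2 * i + 3))) := by
  rw [Real.log_prod]
  · apply Finset.sum_congr rfl
    intro i _
    have h1 : (0:ℝ) < 2*(i:ℝ)+1 := by positivity
    have h2 : (0:ℝ) < 2*(i:ℝ)+2 := by positivity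
    have h3 : (0:ℝ) < 2*(i:ℝ)+3 := by positivity
    rw [Real.log_mul (by positivity) (by positivity),
      Real.log_div h2.ne' h1.ne', Real.log_div h2.ne' h3.ne']
    unfold wk
    ring
  · intro i _
    positivity

lemma tendsto_sum_wk : Tendsto (fun n => ∑ i ∈ range n, wk i) atTop (𝓝 (Real.log (π/2))) := by
  have := Real.tendsto_prod_pi_div_two.log (by positivity)
  apply this.congr
  intro n
  rw [sum_wk]

lemma wk_nonneg (k : ℕ) : 0 ≤ wk k := by
  unfold wk
  have h1 : (0:ℝ) < 2*(k:ℝ)+1 := by positivity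
  have h3 : (0:ℝ) < 2*(k:ℝ)+3 := by positivity
  have e : 2*Real.log (2*(k:ℝ)+2) = Real.log ((2*(k:ℝ)+2)^2) := by
    rw [Real.log_pow]
    push_cast
    ring
  rw [e, sub_sub, ← Real.log_mul h1.ne' h3.ne', sub_nonneg]
  apply Real.log_le_log (by positivity)
  nlinarith

lemma wk_le_ck (k : ℕ) : wk k ≤ ck k := by
  have := Term_nonneg k
  rw [Term_eq] at this
  linarith

lemma summable_wk : Summable wk :=
  Summable.of_nonneg_of_le wk_nonneg wk_le_ck summable_ck

lemma hasSum_wk : HasSum wk (Real.log (π/2)) := by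
  have h := summable_wk.hasSum
  have := h.tendsto_sum_nat
  rw [tendsto_nhds_unique this tendsto_sum_wk] at h
  exact h

lemma hasSum_Term : HasSum Term (Real.log (4/π)) := by
  have h := hasSum_ck.sub hasSum_wk
  have e : Real.log 2 - Real.log (π/2) = Real.log (4/π) := by
    rw [Real.log_div (by norm_num) pi_ne_zero, Real.log_div pi_ne_zero (by norm_num),
      show (4:ℝ) = 2*2 by norm_num, Real.log_mul (by norm_num) (by norm_num)]
    ring
  rw [e] at h
  apply h.congr_fun
  intro k
  rw [Term_eq]

lemma tsum_Term : ∑' k : ℕ, ENNReal.ofReal (Term k) = ENNReal.ofReal (Real.log (4/π)) := by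
  rw [← ENNReal.ofReal_tsum_of_nonneg Term_nonneg hasSum_Term.summable, hasSum_Term.tsum_eq]


lemma measurable_negf_real : Measurable negf := by
  unfold negf
  exact (measurable_const.sub measurable_fst).div
    ((measurable_const.add (measurable_fst.mul measurable_snd)).mul
      (Real.measurable_log.comp (measurable_fst.mul measurable_snd)).neg)

lemma negf_eq {p : ℝ × ℝ} (hp : p ∈ (Ioo (0:ℝ) 1 ×ˢ Ioo (0:ℝ) 1)) :
    negf p = -((1 - p.1) / ((1 + p.1 * p.2) * Real.log (p.1 * p.2))) := by
  unfold negf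
  rw [mul_neg, div_neg]

lemma negf_nonneg {p : ℝ × ℝ} (hp : p ∈ (Ioo (0:ℝ) 1 ×ˢ Ioo (0:ℝ) 1)) : 0 ≤ negf p := by
  have hu := mem_Ioo_mul hp
  have hlog : Real.log (p.1*p.2) < 0 := Real.log_neg hu.1 hu.2
  have h1 : p.1 < 1 := hp.1.2
  unfold negf
  apply div_nonneg (by linarith)
  have h2 : (0:ℝ) < 1 + p.1*p.2 := by linarith [hu.1]
  have h3 : (0:ℝ) < -Real.log (p.1*p.2) := by linarith
  positivity

theorem stmt_4 :
    IntegrableOn (fun p : ℝ × ℝ => (1 - p.1) / ((1 + p.1 * p.2) * Real.log (p.1 * p.2)))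
        (Set.Ioo 0 1 ×ˢ Set.Ioo 0 1) ∧
      ∫ p in (Set.Ioo (0:ℝ) 1 ×ˢ Set.Ioo (0:ℝ) 1),
          (1 - p.1) / ((1 + p.1 * p.2) * Real.log (p.1 * p.2)) =
        -Real.log (4 / Real.pi) := by
  have hS : MeasurableSet (Ioo (0:ℝ) 1 ×ˢ Ioo (0:ℝ) 1) :=
    measurableSet_Ioo.prod measurableSet_Ioo
  set f : ℝ × ℝ → ℝ := fun p => (1 - p.1) / ((1 + p.1 * p.2) * Real.log (p.1 * p.2)) with hfdef
  have key : ∫⁻ p in (Ioo (0:ℝ) 1 ×ˢ Ioo (0:ℝ) 1), ENNReal.ofReal (negf p) =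
      ENNReal.ofReal (Real.log (4/π)) := main_lintegral.trans tsum_Term
  have hnn : 0 ≤ᵐ[volume.restrict (Ioo (0:ℝ) 1 ×ˢ Ioo (0:ℝ) 1)] negf :=
    (ae_restrict_iff' hS).2 (ae_of_all _ fun p hp => negf_nonneg hp)
  have hfeq : ∀ᵐ p ∂(volume.restrict (Ioo (0:ℝ) 1 ×ˢ Ioo (0:ℝ) 1)), negf p = -(f p) :=
    (ae_restrict_iff' hS).2 (ae_of_all _ fun p hp => negf_eq hp)
  have hint : IntegrableOn negf (Ioo (0:ℝ) 1 ×ˢ Ioo (0:ℝ) 1) := by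
    refine ⟨measurable_negf_real.aestronglyMeasurable, ?_⟩
    rw [hasFiniteIntegral_iff_ofReal hnn, key]
    exact ENNReal.ofReal_lt_top
  have hlog_nonneg : 0 ≤ Real.log (4/π) := by
    apply Real.log_nonneg
    rw [le_div_iff₀ Real.pi_pos]
    linarith [Real.pi_le_four]
  have hv : ∫ p in (Ioo (0:ℝ) 1 ×ˢ Ioo (0:ℝ) 1), negf p = Real.log (4/π) := by
    rw [integral_eq_lintegral_of_nonneg_ae hnn measurable_negf_real.aestronglyMeasurable,
      key, ENNReal.toReal_ofReal hlog_nonneg]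
  constructor
  · exact hint.neg.congr (hfeq.mono fun p hp => by simp [hp])
  · have h1 : ∫ p in (Ioo (0:ℝ) 1 ×ˢ Ioo (0:ℝ) 1), f p =
        ∫ p in (Ioo (0:ℝ) 1 ×ˢ Ioo (0:ℝ) 1), -(negf p) :=
      integral_congr_ae (hfeq.mono fun p hp => by simp [hp])
    rw [h1, integral_neg, hv]
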